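/- For every positive integer n, there exists a nonnegative integer k such that 3^n divides 10^k + 8. In particular, every power of 3 has a multiple whose decimal expansion has exactly two nonzero digits. -/
import Mathlib

lemma aux_sq_dvd (a : ℤ) : ∀ j : ℕ, a ^ 2 ∣ (1 + a) ^ j - (1 + j * a) := by
  intro j
  induction j with
  | zero => simp
  | succ j ih =>
    have h : (1 + a) ^ (j + 1) - (1 + (j + 1 : ℕ) * a)
        = (1 + a) * ((1 + a) ^ j - (1 + j * a)) + j * a ^ 2 := by
      push_cast; ring
    rw [h]
    exact dvd_add (ih.mul_left _) (Dvd.intro_left _ rfl)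

lemma aux_ten_pow (n : ℕ) :
    ∃ u : ℤ, ¬ (3 ∣ u) ∧ (10 : ℤ) ^ (3 ^ n) = 1 + 3 ^ (n + 2) * u := by
  induction n with
  | zero => exact ⟨1, by decide, by norm_num⟩
  | succ n ih =>
    obtain ⟨u, hu, h⟩ := ih
    refine ⟨u + 3 * (3 ^ (n + 1) * u ^ 2 + 3 ^ (2 * n + 2) * u ^ 3), ?_, ?_⟩
    · intro h3
      apply hu
      have := dvd_sub h3 (dvd_mul_right 3 (3 ^ (n + 1) * u ^ 2 + 3 ^ (2 * n + 2) * u ^ 3))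
      simpa using this
    · rw [pow_succ, pow_mul, h]
      ring

lemma aux_main (n : ℕ) : ∃ k : ℕ, (3 : ℤ) ^ (n + 2) ∣ 10 ^ k + 8 := by
  induction n with
  | zero => exact ⟨0, by norm_num⟩
  | succ n ih =>
    obtain ⟨k, m, hm⟩ := ih
    obtain ⟨u, hu, h10⟩ := aux_ten_pow n
    set c : ZMod 3 := ((u * 10 ^ k : ℤ) : ZMod 3) with hc_def
    have hc : c ≠ 0 := by
      have : c = ((u : ZMod 3)) := by
        rw [hc_def]; push_cast
        rw [show ((10 : ZMod 3)) = 1 by decide]; simp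
      rw [this]
      intro h0
      exact hu ((ZMod.intCast_zmod_eq_zero_iff_dvd u 3).mp h0)
    set j : ℕ := (((-m : ℤ) : ZMod 3) * c⁻¹).val with hj_def
    have hj : (3 : ℤ) ∣ m + j * (u * 10 ^ k) := by
      have h0 : ((m + j * (u * 10 ^ k) : ℤ) : ZMod 3) = 0 := by
        push_cast
        rw [hj_def]
        rw [ZMod.natCast_val, ZMod.cast_id]
        have hc' : (u : ZMod 3) * (10 : ZMod 3) ^ k = c := by
          rw [hc_def]; push_cast; ring
        rw [hc', mul_assoc, inv_mul_cancel₀ hc]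
        push_cast
        ring
      exact (ZMod.intCast_zmod_eq_zero_iff_dvd _ 3).mp h0
    obtain ⟨t, ht⟩ := hj
    obtain ⟨w, hw⟩ := aux_sq_dvd ((3 : ℤ) ^ (n + 2) * u) j
    have hwEq : ((1 : ℤ) + 3 ^ (n + 2) * u) ^ j
        = 1 + j * (3 ^ (n + 2) * u) + (3 ^ (n + 2) * u) ^ 2 * w := by
      linarith [hw]
    refine ⟨k + 3 ^ n * j, ?_⟩
    have key : (10 : ℤ) ^ (k + 3 ^ n * j) + 8
        = 3 ^ (n + 3) * t + 3 ^ (2 * n + 4) * (u ^ 2 * 10 ^ k * w) := by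
      rw [pow_add, pow_mul, h10, hwEq]
      linear_combination hm + (3 : ℤ) ^ (n + 2) * ht
    rw [show n + 1 + 2 = n + 3 from rfl, key]
    exact dvd_add (dvd_mul_right _ _) ((pow_dvd_pow 3 (by omega)).mul_right _)

theorem stmt_17 (n : ℕ) (hn : 0 < n) :
    ∃ k : ℕ, 3 ^ n ∣ 10 ^ k + 8 := by
  obtain ⟨k, hk⟩ := aux_main n
  refine ⟨k, ?_⟩
  have h := dvd_trans (pow_dvd_pow (3 : ℤ) (by omega : n ≤ n + 2)) hk
  exact_mod_cast h
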